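/- Let H be a separable Hilbert space, Π : H → H a finite-rank orthogonal projection, a ∈ (0,1), and define S_a = {φ ∈ H : ‖φ‖ = 1, ‖Πφ‖ ≥ a}. Suppose A ⊆ H is a set whose linear span is dense in H. Then there exist finitely many elements A_1,…,A_m ∈ A and a constant Λ > 0 such that inf_{φ ∈ S_a} Σ_{i=1}^m ⟨φ, A_i⟩² ≥ Λ. -/

import Mathlib

open scoped RealInnerProductSpace

/-!
STATEMENT 17: Let `H` be a separable Hilbert space, `Π` a finite-rank orthogonal
projection (onto the finite-dimensional subspace `K`), `a ∈ (0,1)`, and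
`S_a = {φ : ‖φ‖ = 1, ‖Πφ‖ ≥ a}`. If `A ⊆ H` has dense linear span, then there are
finitely many `A_1,…,A_m ∈ A` and `Λ > 0` with `inf_{φ ∈ S_a} Σ_i ⟨φ, A_i⟩² ≥ Λ`.
-/
theorem uniform_nondegeneracy_from_dense_span
    {H : Type*} [NormedAddCommGroup H] [InnerProductSpace ℝ H] [CompleteSpace H]
    [TopologicalSpace.SeparableSpace H]
    (K : Submodule ℝ H) [FiniteDimensional ℝ K]
    (a : ℝ) (ha0 : 0 < a) (ha1 : a < 1)
    (A : Set H) (hA : (Submodule.span ℝ A).topologicalClosure = ⊤) :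
    ∃ (m : ℕ) (v : Fin m → H), (∀ i, v i ∈ A) ∧
      ∃ Λ : ℝ, 0 < Λ ∧ ∀ φ : H, ‖φ‖ = 1 → a ≤ ‖(K.orthogonalProjection φ : K)‖ →
        Λ ≤ ∑ i, (⟪φ, v i⟫) ^ 2 := by
  classical
  set n := Module.finrank ℝ K with hn
  let b := stdOrthonormalBasis ℝ K
  set ε : ℝ := a ^ 2 / (2 * (n + 1)) with hεdef
  have hεpos : 0 < ε := by positivity
  -- every point of H is in the closure of the span of A
  have hdense : ∀ x : H, x ∈ closure ((Submodule.span ℝ A : Submodule ℝ H) : Set H) := by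
    intro x
    have : x ∈ (Submodule.span ℝ A).topologicalClosure := by rw [hA]; trivial
    exact this
  -- approximate each basis vector by a finite combination of elements of A
  have key : ∀ j : Fin n, ∃ c : H →₀ ℝ, ↑c.support ⊆ A ∧
      ‖(b j : H) - c.sum (fun v r => r • v)‖ < ε := by
    intro j
    obtain ⟨y, hy, hyd⟩ := Metric.mem_closure_iff.mp (hdense (b j : H)) ε hεpos
    obtain ⟨c, hsupp, hsum⟩ := Submodule.mem_span_set.mp hy
    exact ⟨c, hsupp, by rw [hsum]; simpa [dist_eq_norm] using hyd⟩
  choose c hcA hclose using key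
  set S : Finset H := Finset.univ.biUnion (fun j : Fin n => (c j).support) with hS
  have hSA : ∀ x ∈ S, x ∈ A := by
    intro x hx
    obtain ⟨j, -, hj⟩ := Finset.mem_biUnion.mp hx
    exact hcA j hj
  refine ⟨S.card, fun i => ((S.equivFin.symm i : S) : H), fun i => hSA _ (S.equivFin.symm i).2, ?_⟩
  -- uniform constant
  set B : H → ℝ := fun x => ∑ j : Fin n, |c j x| with hB
  set M : ℝ := ∑ x ∈ S, (B x) ^ 2 with hM
  have hMnn : 0 ≤ M := Finset.sum_nonneg fun _ _ => sq_nonneg _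
  refine ⟨(a ^ 2 / 2) ^ 2 / (M + 1), div_pos (by positivity) (by linarith), ?_⟩
  intro φ hφ hφa
  set k : K := K.orthogonalProjection φ with hk
  have hk1 : ‖k‖ ≤ 1 := by
    calc ‖k‖ ≤ ‖K.orthogonalProjection‖ * ‖φ‖ := (K.orthogonalProjection).le_opNorm φ
    _ ≤ 1 * 1 := by
        apply mul_le_mul (Submodule.orthogonalProjectionOnto_norm_le K) (le_of_eq hφ) (norm_nonneg _) zero_le_one
    _ = 1 := one_mul 1
  -- the coefficients of k in the orthonormal basis
  set coef : Fin n → ℝ := fun j => ⟪(b j : H), (k : H)⟫ with hcoef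
  have hcoef1 : ∀ j, |coef j| ≤ 1 := by
    intro j
    calc |coef j| ≤ ‖(b j : H)‖ * ‖(k : H)‖ := abs_real_inner_le_norm _ _
    _ ≤ 1 * 1 := by
        apply mul_le_mul (le_of_eq (b.orthonormal.1 j)) (by simpa using hk1)
          (norm_nonneg _) zero_le_one
    _ = 1 := one_mul 1
  -- the approximating vector w
  set w : H := ∑ j : Fin n, coef j • (c j).sum (fun v r => r • v) with hw
  have hkexp : (k : H) = ∑ j : Fin n, coef j • (b j : H) := by
    have := b.sum_repr' k
    calc (k : H) = ((∑ j : Fin n, ⟪b j, k⟫ • b j : K) : H) := by rw [this]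
    _ = ∑ j : Fin n, coef j • (b j : H) := by
        push_cast
        refine Finset.sum_congr rfl fun j _ => ?_
        congr 1
  have hkw : ‖(k : H) - w‖ ≤ n * ε := by
    have : (k : H) - w = ∑ j : Fin n, coef j • ((b j : H) - (c j).sum (fun v r => r • v)) := by
      rw [hkexp, hw, ← Finset.sum_sub_distrib]
      exact Finset.sum_congr rfl fun j _ => (smul_sub _ _ _).symm
    rw [this]
    calc ‖∑ j : Fin n, coef j • ((b j : H) - (c j).sum (fun v r => r • v))‖
        ≤ ∑ j : Fin n, ‖coef j • ((b j : H) - (c j).sum (fun v r => r • v))‖ :=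
          norm_sum_le _ _
      _ ≤ ∑ j : Fin n, (1 : ℝ) * ε := by
          refine Finset.sum_le_sum fun j _ => ?_
          rw [norm_smul, Real.norm_eq_abs]
          exact mul_le_mul (hcoef1 j) (hclose j).le (norm_nonneg _) zero_le_one
      _ = n * ε := by simp
  have hnε : (n : ℝ) * ε ≤ a ^ 2 / 2 := by
    have hn0 : (0 : ℝ) ≤ n := Nat.cast_nonneg n
    rw [hεdef, mul_div_assoc', div_le_div_iff₀ (by positivity) (by norm_num)]
    nlinarith [sq_nonneg a]
  -- ⟪φ, k⟫ = ‖k‖²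
  have hφk : ⟪φ, (k : H)⟫ = ‖k‖ ^ 2 := by
    have := Submodule.inner_orthogonalProjectionOnto_eq_of_mem_right (𝕜 := ℝ) (K := K) k φ
    rw [← hk] at this
    rw [← this, real_inner_self_eq_norm_sq]
  have hφw : a ^ 2 / 2 ≤ ⟪φ, w⟫ := by
    have h1 : ⟪φ, (k : H)⟫ - ⟪φ, w⟫ = ⟪φ, (k : H) - w⟫ := (inner_sub_right _ _ _).symm
    have h2 : ⟪φ, (k : H) - w⟫ ≤ ‖φ‖ * ‖(k : H) - w‖ := real_inner_le_norm _ _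
    have h3 : a ^ 2 ≤ ‖k‖ ^ 2 := by
      have := pow_le_pow_left₀ ha0.le hφa 2
      simpa using this
    have h4 : ‖φ‖ * ‖(k : H) - w‖ ≤ a ^ 2 / 2 := by
      rw [hφ, one_mul]; exact hkw.trans hnε
    nlinarith [hφk]
  -- rewrite w as a combination of elements of S
  set T : H → ℝ := fun x => ∑ j : Fin n, coef j * c j x with hT
  have hwS : w = ∑ x ∈ S, T x • x := by
    rw [hw]
    have hsum : ∀ j : Fin n, (c j).sum (fun v r => r • v) = ∑ x ∈ S, c j x • x := by
      intro j
      refine Finsupp.sum_of_support_subset _ ?_ _ (fun x _ => by simp)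
      exact fun x hx => Finset.mem_biUnion.mpr ⟨j, Finset.mem_univ j, hx⟩
    calc ∑ j : Fin n, coef j • (c j).sum (fun v r => r • v)
        = ∑ j : Fin n, ∑ x ∈ S, (coef j * c j x) • x := by
          refine Finset.sum_congr rfl fun j _ => ?_
          rw [hsum j, Finset.smul_sum]
          exact Finset.sum_congr rfl fun x _ => (smul_smul _ _ _)
      _ = ∑ x ∈ S, T x • x := by
          rw [Finset.sum_comm]
          refine Finset.sum_congr rfl fun x _ => ?_
          rw [hT, Finset.sum_smul]
  have hφwsum : ⟪φ, w⟫ = ∑ x ∈ S, T x * ⟪φ, x⟫ := by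
    rw [hwS, inner_sum]
    exact Finset.sum_congr rfl fun x _ => real_inner_smul_right _ _ _
  have hTB : ∀ x, (T x) ^ 2 ≤ (B x) ^ 2 := by
    intro x
    have h1 : |T x| ≤ B x := by
      rw [hT, hB]
      calc |∑ j : Fin n, coef j * c j x| ≤ ∑ j : Fin n, |coef j * c j x| :=
            Finset.abs_sum_le_sum_abs _ _
        _ ≤ ∑ j : Fin n, |c j x| := by
            refine Finset.sum_le_sum fun j _ => ?_
            rw [abs_mul]
            exact mul_le_of_le_one_left (abs_nonneg _) (hcoef1 j)
    calc (T x) ^ 2 = |T x| ^ 2 := (sq_abs _).symm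
      _ ≤ (B x) ^ 2 := pow_le_pow_left₀ (abs_nonneg _) h1 2
  -- Cauchy-Schwarz
  have hCS : (⟪φ, w⟫) ^ 2 ≤ (M + 1) * ∑ x ∈ S, (⟪φ, x⟫) ^ 2 := by
    rw [hφwsum]
    calc (∑ x ∈ S, T x * ⟪φ, x⟫) ^ 2
        ≤ (∑ x ∈ S, (T x) ^ 2) * ∑ x ∈ S, (⟪φ, x⟫) ^ 2 :=
          Finset.sum_mul_sq_le_sq_mul_sq S _ _
      _ ≤ (M + 1) * ∑ x ∈ S, (⟪φ, x⟫) ^ 2 := by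
          refine mul_le_mul ?_ le_rfl (Finset.sum_nonneg fun _ _ => sq_nonneg _) (by linarith)
          calc ∑ x ∈ S, (T x) ^ 2 ≤ ∑ x ∈ S, (B x) ^ 2 :=
                Finset.sum_le_sum fun x _ => hTB x
            _ ≤ M + 1 := by rw [hM]; linarith
  have hfin : ∑ i : Fin S.card, (⟪φ, ((S.equivFin.symm i : S) : H)⟫) ^ 2
      = ∑ x ∈ S, (⟪φ, x⟫) ^ 2 := by
    rw [← Finset.sum_attach S (fun x => (⟪φ, x⟫) ^ 2)]
    exact Fintype.sum_equiv S.equivFin.symm _ _ (fun i => rfl)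
  rw [hfin]
  rw [div_le_iff₀ (by linarith : (0:ℝ) < M + 1)]
  calc (a ^ 2 / 2) ^ 2 ≤ (⟪φ, w⟫) ^ 2 := by
        apply pow_le_pow_left₀ (by positivity) hφw
    _ ≤ (M + 1) * ∑ x ∈ S, (⟪φ, x⟫) ^ 2 := hCS
    _ = (∑ x ∈ S, (⟪φ, x⟫) ^ 2) * (M + 1) := mul_comm _ _
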